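/- arXiv:0810.2384 — 5 statements merged into one kernel-verified Lean document; each statement's English description precedes it below -/
import Mathlib

section
/- If G is a group and a, b, c ∈ G, then the Hall–Witt-type product [[a,b],c]·[[b,c],a]·[[c,a],b] lies in the fourth term γ₄(G) = [G,G,G,G] of the lower central series of G. -/
open scoped commutatorElement

section HallWittAux

variable {Q : Type*} [Group Q]

/-- Conjugation fixes central elements. -/
private theorem hw_conj_id (X g : Q) (h : ∀ k : Q, Commute X k) :
    g⁻¹ * X * g = X := by
  rw [mul_assoc, (h g).eq, ← mul_assoc, inv_mul_cancel, one_mul]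

/-- Multiplying by a central element doesn't change commutators. -/
private theorem hw_comm_mul (u t w : Q) (ht : ∀ k : Q, Commute t k) :
    ⁅u * t, w⁆ = ⁅u, w⁆ := by
  have h1 : ⁅u * t, w⁆ = u * ⁅t, w⁆ * u⁻¹ * ⁅u, w⁆ := by
    simp only [commutatorElement_def]; group
  rw [h1, commutatorElement_eq_one_iff_commute.mpr (ht w)]
  group

/-- If `⁅u,w⁆` is central, then `⁅u⁻¹,w⁆ = ⁅u,w⁆⁻¹`. -/
private theorem hw_comm_inv_left (u w : Q) (h : ∀ k : Q, Commute ⁅u, w⁆ k) :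
    ⁅u⁻¹, w⁆ = ⁅u, w⁆⁻¹ := by
  have h1 : ⁅u⁻¹, w⁆ = u⁻¹ * ⁅u, w⁆⁻¹ * u := by
    simp only [commutatorElement_def]; group
  rw [h1, hw_conj_id _ u (fun k => (h k).inv_left)]

/-- If `⁅u,w⁆` is central, then `⁅u,w⁻¹⁆ = ⁅u,w⁆⁻¹`. -/
private theorem hw_comm_inv_right (u w : Q) (h : ∀ k : Q, Commute ⁅u, w⁆ k) :
    ⁅u, w⁻¹⁆ = ⁅u, w⁆⁻¹ := by
  have h1 : ⁅u, w⁻¹⁆ = w⁻¹ * ⁅u, w⁆⁻¹ * w := by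
    simp only [commutatorElement_def]; group
  rw [h1, hw_conj_id _ w (fun k => (h k).inv_left)]

/-- In a group where all triple commutators are central, the Hall–Witt-type
product of triple commutators is trivial. -/
private theorem hw_aux (hcen : ∀ x y z g : Q, Commute ⁅⁅x, y⁆, z⁆ g) (a b c : Q) :
    ⁅⁅b, a⁆, c⁆ * ⁅⁅c, b⁆, a⁆ * ⁅⁅a, c⁆, b⁆ = 1 := by
  -- reduction for inner inverse
  have key : ∀ x y w : Q, ⁅⁅x, y⁻¹⁆, w⁆ = ⁅⁅x, y⁆, w⁆⁻¹ := by
    intro x y w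
    have e1 : ⁅x, y⁻¹⁆ = ⁅y, x⁆ * ⁅⁅x, y⁆, y⁻¹⁆ := by
      simp only [commutatorElement_def]; group
    rw [e1, hw_comm_mul _ _ _ (hcen x y y⁻¹),
      show (⁅y, x⁆ : Q) = ⁅x, y⁆⁻¹ from (commutatorElement_inv x y).symm,
      hw_comm_inv_left _ _ (hcen x y w)]
  -- reduction for both inverses
  have key2 : ∀ x y w : Q, ⁅⁅x, y⁻¹⁆, w⁻¹⁆ = ⁅⁅x, y⁆, w⁆ := by
    intro x y w
    rw [hw_comm_inv_right _ _ (hcen x y⁻¹ w), key, inv_inv]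
  -- Hall–Witt identity (a pure group identity)
  have HW : (b⁻¹ * ⁅⁅b, a⁻¹⁆, c⁻¹⁆ * b) * (c⁻¹ * ⁅⁅c, b⁻¹⁆, a⁻¹⁆ * c) *
      (a⁻¹ * ⁅⁅a, c⁻¹⁆, b⁻¹⁆ * a) = 1 := by
    simp only [commutatorElement_def]; group
  rw [key2 b a c, key2 c b a, key2 a c b,
    hw_conj_id _ b (hcen b a c), hw_conj_id _ c (hcen c b a),
    hw_conj_id _ a (hcen a c b)] at HW
  exact HW

end HallWittAux

/-- The Hall–Witt product of triple commutators lies in `γ₄`. -/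
private theorem hw_mem_lcs3 {G : Type*} [Group G] (a b c : G) :
    ⁅⁅b, a⁆, c⁆ * ⁅⁅c, b⁆, a⁆ * ⁅⁅a, c⁆, b⁆ ∈ (⊤ : Subgroup G).lowerCentralSeries 3 := by
  set N := (⊤ : Subgroup G).lowerCentralSeries 3 with hN
  rw [← QuotientGroup.eq_one_iff]
  have hmem : ∀ x y z g : G, ⁅⁅⁅x, y⁆, z⁆, g⁆ ∈ (⊤ : Subgroup G).lowerCentralSeries 3 := by
    intro x y z g
    refine Subgroup.commutator_mem_commutator ?_ (Subgroup.mem_top g)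
    refine Subgroup.commutator_mem_commutator ?_ (Subgroup.mem_top z)
    exact Subgroup.commutator_mem_commutator (Subgroup.mem_top x) (Subgroup.mem_top y)
  have hcen : ∀ x y z g : G ⧸ N, Commute ⁅⁅x, y⁆, z⁆ g := by
    intro x y z g
    obtain ⟨x, rfl⟩ := QuotientGroup.mk_surjective x
    obtain ⟨y, rfl⟩ := QuotientGroup.mk_surjective y
    obtain ⟨z, rfl⟩ := QuotientGroup.mk_surjective z
    obtain ⟨g, rfl⟩ := QuotientGroup.mk_surjective g
    rw [← commutatorElement_eq_one_iff_commute]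
    have h1 : (QuotientGroup.mk' N) ⁅⁅⁅x, y⁆, z⁆, g⁆ = 1 :=
      (QuotientGroup.eq_one_iff _).mpr (hmem x y z g)
    simpa only [map_commutatorElement, QuotientGroup.mk'_apply] using h1
  show ((QuotientGroup.mk' N) (⁅⁅b, a⁆, c⁆ * ⁅⁅c, b⁆, a⁆ * ⁅⁅a, c⁆, b⁆)) = 1
  simp only [map_mul, map_commutatorElement]
  exact hw_aux hcen _ _ _

/-- For any group `G` and `a b c : G`, with `[x,y] = x⁻¹y⁻¹xy`, the product
`[[a,b],c]·[[b,c],a]·[[c,a],b]` lies in the fourth term `γ₄(G)` of the lower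
central series (which is `lowerCentralSeries G 3` in Mathlib's indexing,
since `lowerCentralSeries G 0 = G`). -/
theorem stmt1 {G : Type*} [Group G] (a b c : G) :
    (fun x y : G => x⁻¹ * y⁻¹ * x * y) ((fun x y : G => x⁻¹ * y⁻¹ * x * y) a b) c *
      (fun x y : G => x⁻¹ * y⁻¹ * x * y) ((fun x y : G => x⁻¹ * y⁻¹ * x * y) b c) a *
      (fun x y : G => x⁻¹ * y⁻¹ * x * y) ((fun x y : G => x⁻¹ * y⁻¹ * x * y) c a) b ∈
      (⊤ : Subgroup G).lowerCentralSeries 3 := by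
  have h := hw_mem_lcs3 (G := G) a⁻¹ b⁻¹ c⁻¹
  have e : ⁅⁅b⁻¹, a⁻¹⁆, c⁻¹⁆ * ⁅⁅c⁻¹, b⁻¹⁆, a⁻¹⁆ * ⁅⁅a⁻¹, c⁻¹⁆, b⁻¹⁆ =
      (fun x y : G => x⁻¹ * y⁻¹ * x * y) ((fun x y : G => x⁻¹ * y⁻¹ * x * y) a b) c *
      (fun x y : G => x⁻¹ * y⁻¹ * x * y) ((fun x y : G => x⁻¹ * y⁻¹ * x * y) b c) a *
      (fun x y : G => x⁻¹ * y⁻¹ * x * y) ((fun x y : G => x⁻¹ * y⁻¹ * x * y) c a) b := by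
    simp only [commutatorElement_def]; group
  rw [e] at h
  exact h
end

section
/- Let p be a prime and Q a finite p-group. Suppose ζ is an automorphism of Q of order 3 with trivial fixed-point subgroup (C_Q(ζ) = 1). Then Q is nilpotent of class at most 2. -/
open scoped commutatorElement IsMulCommutative

section Generic
variable {G : Type*} [Group G]

private theorem lcs_succ (n : ℕ) :
    (⊤ : Subgroup G).lowerCentralSeries (n + 1) = ⁅(⊤ : Subgroup G).lowerCentralSeries n, (⊤ : Subgroup G)⁆ := rfl

private theorem lcs_characteristic (n : ℕ) : ((⊤ : Subgroup G).lowerCentralSeries n).Characteristic := by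
  induction n with
  | zero => rw [lowerCentralSeries_zero]; infer_instance
  | succ n ih => rw [lcs_succ]; exact @Subgroup.commutator_characteristic _ _ _ _ ih inferInstance

private theorem lcs_map_surj {H : Type*} [Group H] (f : G →* H) (hf : Function.Surjective f)
    (n : ℕ) : Subgroup.map f ((⊤ : Subgroup G).lowerCentralSeries n) = (⊤ : Subgroup H).lowerCentralSeries n := by
  induction n with
  | zero =>
    rw [lowerCentralSeries_zero, lowerCentralSeries_zero]
    exact Subgroup.map_top_of_surjective f hf
  | succ n ih =>
    rw [lcs_succ, lcs_succ, Subgroup.map_commutator, ih, Subgroup.map_top_of_surjective f hf]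

private theorem mem_lcs_one (x y : G) : ⁅x, y⁆ ∈ (⊤ : Subgroup G).lowerCentralSeries 1 := by
  rw [lcs_succ]
  exact Subgroup.commutator_mem_commutator (Subgroup.mem_top x) (Subgroup.mem_top y)

private theorem mem_lcs_succ {x : G} {n : ℕ} (hx : x ∈ (⊤ : Subgroup G).lowerCentralSeries n) (z : G) :
    ⁅x, z⁆ ∈ (⊤ : Subgroup G).lowerCentralSeries (n + 1) := by
  rw [lcs_succ]
  exact Subgroup.commutator_mem_commutator hx (Subgroup.mem_top z)

private theorem comm_mul_left' (a b z : G) : ⁅a * b, z⁆ = a * ⁅b, z⁆ * a⁻¹ * ⁅a, z⁆ := by group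

private theorem comm_mul_right' (a z w : G) : ⁅a, z * w⁆ = ⁅a, z⁆ * (z * ⁅a, w⁆ * z⁻¹) := by group

private theorem conj_central (a u : G) (hu : ∀ w, Commute u w) : a * u * a⁻¹ = u := by
  rw [← (hu a).eq]; group

private theorem comm_mul_left (a b z : G) (hb : ∀ w, Commute ⁅b, z⁆ w) :
    ⁅a * b, z⁆ = ⁅a, z⁆ * ⁅b, z⁆ := by
  rw [comm_mul_left', conj_central a _ hb, (hb ⁅a, z⁆).eq]

private theorem comm_mul_right (a z w : G) (hw : ∀ u, Commute ⁅a, w⁆ u) :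
    ⁅a, z * w⁆ = ⁅a, z⁆ * ⁅a, w⁆ := by
  rw [comm_mul_right', conj_central z _ hw]

private theorem comm_inv_left' (a z : G) : ⁅a⁻¹, z⁆ = a⁻¹ * ⁅a, z⁆⁻¹ * a := by group

private theorem comm_inv_left (a z : G) (ha : ∀ w, Commute ⁅a, z⁆ w) : ⁅a⁻¹, z⁆ = ⁅a, z⁆⁻¹ := by
  rw [comm_inv_left', ← ((ha a⁻¹).inv_left).eq]; group

private theorem comm_inv_right' (a z : G) : ⁅a, z⁻¹⁆ = z⁻¹ * ⁅a, z⁆⁻¹ * z := by group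

private theorem comm_inv_right (a z : G) (ha : ∀ w, Commute ⁅a, z⁆ w) : ⁅a, z⁻¹⁆ = ⁅a, z⁆⁻¹ := by
  rw [comm_inv_right', ← ((ha z⁻¹).inv_left).eq]; group

end Generic

private theorem esys_add {A : Type*} [AddCommGroup A] (b b1 b2 p p1 p2 q q1 : A)
    (hb : b + b1 + b2 = 0) (hp : p + p1 + p2 = 0)
    (e1 : b2 = b1 + q + p + b) (e3 : p1 = -b1 + -q) (e3' : p2 = -b2 + -q1)
    (e4 : q1 = -b1 + -p) :
    ((p + b1 + b) + (p + b1 + b)) + (p + b1 + b) = 0 ∧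
      (p + b1 + b = 0 → p = b2 ∧ q = b2) := by
  subst e4 e3' e3 e1
  have hq3 : ((q + b1 + b) + (q + b1 + b)) + (q + b1 + b) = 0 := by
    have h : ((q + b1 + b) + (q + b1 + b)) + (q + b1 + b) =
        (b + b1 + (b1 + q + p + b)) -
          (p + (-b1 + -q) + (-(b1 + q + p + b) + -(-b1 + -p))) := by abel
    rw [h, hb, hp, sub_zero]
  have hpq : p + b1 + b = ((q + b1 + b) + (q + b1 + b)) +
      (p + (-b1 + -q) + (-(b1 + q + p + b) + -(-b1 + -p))) := by abel
  rw [hp, add_zero] at hpq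
  constructor
  · rw [hpq]
    have h : ((q + b1 + b) + (q + b1 + b) + ((q + b1 + b) + (q + b1 + b))) +
          ((q + b1 + b) + (q + b1 + b)) =
        (((q + b1 + b) + (q + b1 + b)) + (q + b1 + b)) +
          (((q + b1 + b) + (q + b1 + b)) + (q + b1 + b)) := by abel
    rw [h, hq3, add_zero]
  · intro hpe
    have h2 : (q + b1 + b) + (q + b1 + b) = 0 := by rw [← hpq, hpe]
    have hq1 : q + b1 + b = 0 := by
      have h : q + b1 + b = (((q + b1 + b) + (q + b1 + b)) + (q + b1 + b)) -
          ((q + b1 + b) + (q + b1 + b)) := by abel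
      rw [h, hq3, h2, sub_zero]
    constructor
    · have h : b1 + q + p + b = ((q + b1 + b)) + p := by abel
      rw [h, hq1, zero_add]
    · have h : b1 + q + p + b = ((p + b1 + b)) + q := by abel
      rw [h, hpe, zero_add]

private theorem esys_comm {A : Type*} [CommGroup A] (b b1 b2 p p1 p2 q q1 : A)
    (hb : b * b1 * b2 = 1) (hp : p * p1 * p2 = 1)
    (e1 : b2 = b1 * q * p * b) (e3 : p1 = b1⁻¹ * q⁻¹) (e3' : p2 = b2⁻¹ * q1⁻¹)
    (e4 : q1 = b1⁻¹ * p⁻¹) :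
    ((p * b1 * b) * (p * b1 * b)) * (p * b1 * b) = 1 ∧
      (p * b1 * b = 1 → p = b2 ∧ q = b2) :=
  esys_add (A := Additive A) b b1 b2 p p1 p2 q q1 hb hp e1 e3 e3' e4

private theorem dstep {G : Type*} [Group G] (β : MulAut G)
    (h1 : ∀ g : G, g * β g * β (β g) = 1)
    (tor3 : ∀ g : G, (g * g) * g = 1 → g = 1)
    (S : Subgroup G) (hSβ : ∀ g ∈ S, β g ∈ S)
    (cen : ∀ u ∈ S, ∀ v w : G, Commute ⁅u, v⁆ w)
    (c z : G) (hc : c ∈ S) :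
    ⁅c, β z⁆ = β (β ⁅c, z⁆) ∧ ⁅β c, z⁆ = β (β ⁅c, z⁆) := by
  have hβc : β c ∈ S := hSβ c hc
  have hβ2c : β (β c) ∈ S := hSβ _ hβc
  have hmap : ∀ a b : G, β ⁅a, b⁆ = ⁅β a, β b⁆ := fun a b => map_commutatorElement β a b
  have hz2 : β (β z) = (β z)⁻¹ * z⁻¹ := by
    have h := h1 z
    have : β (β z) = (z * β z)⁻¹ := eq_inv_of_mul_eq_one_right h
    rw [this, mul_inv_rev]
  have hc2 : β (β c) = (β c)⁻¹ * c⁻¹ := by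
    have h := h1 c
    have : β (β c) = (c * β c)⁻¹ := eq_inv_of_mul_eq_one_right h
    rw [this, mul_inv_rev]
  set B := ⁅c, z⁆ with hB
  set P := ⁅c, β z⁆ with hP
  set Q := ⁅β c, z⁆ with hQ
  -- ★3 : β P = (β B)⁻¹ * Q⁻¹
  have e3 : β P = (β B)⁻¹ * Q⁻¹ := by
    rw [hP, hmap, hz2, comm_mul_right _ _ _ (fun u => cen _ hβc z⁻¹ u),
      comm_inv_right _ _ (fun u => cen _ hβc (β z) u),
      comm_inv_right _ _ (fun u => cen _ hβc z u), hB, hmap]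
  -- ★4 : β Q = (β B)⁻¹ * P⁻¹
  have e4 : β Q = (β B)⁻¹ * P⁻¹ := by
    rw [hQ, hmap, hc2, comm_mul_left _ _ _ (fun u => cen _ (S.inv_mem hc) (β z) u),
      comm_inv_left _ _ (fun u => cen _ hβc (β z) u),
      comm_inv_left _ _ (fun u => cen _ hc (β z) u), hB, hmap]
  -- e1 : β (β B) = β B * Q * P * B
  have e1 : β (β B) = β B * Q * (P * B) := by
    have h0 : β (β B) = ⁅(β c)⁻¹ * c⁻¹, (β z)⁻¹ * z⁻¹⁆ := by
      rw [hB, hmap, hmap, hz2, hc2]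
    rw [h0, comm_mul_left _ _ _ (fun u => cen _ (S.inv_mem hc) _ u),
      comm_mul_right _ _ _ (fun u => cen _ (S.inv_mem hβc) z⁻¹ u),
      comm_mul_right _ _ _ (fun u => cen _ (S.inv_mem hc) z⁻¹ u),
      comm_inv_left _ _ (fun u => cen _ hβc (β z)⁻¹ u),
      comm_inv_left _ _ (fun u => cen _ hc (β z)⁻¹ u),
      comm_inv_left _ _ (fun u => cen _ hβc z⁻¹ u),
      comm_inv_left _ _ (fun u => cen _ hc z⁻¹ u),
      comm_inv_right _ _ (fun u => cen _ hβc (β z) u),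
      comm_inv_right _ _ (fun u => cen _ hc (β z) u),
      comm_inv_right _ _ (fun u => cen _ hβc z u),
      comm_inv_right _ _ (fun u => cen _ hc z u), hB, hP, hQ, hmap]
    group
  have e3' : β (β P) = (β (β B))⁻¹ * (β Q)⁻¹ := by
    rw [e3, map_mul, map_inv, map_inv]
  have hcen : ∀ u ∈ S, ∀ v : G, ⁅u, v⁆ ∈ Subgroup.center G := fun u hu v =>
    Subgroup.mem_center_iff.mpr fun g => ((cen u hu v g).symm.eq)
  have zB : B ∈ Subgroup.center G := hcen c hc z
  have zP : P ∈ Subgroup.center G := hcen c hc (β z)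
  have zQ : Q ∈ Subgroup.center G := hcen _ hβc z
  have zβB : β B ∈ Subgroup.center G := by rw [hB, hmap]; exact hcen _ hβc _
  have zβ2B : β (β B) ∈ Subgroup.center G := by rw [hB, hmap, hmap]; exact hcen _ hβ2c _
  have zβP : β P ∈ Subgroup.center G := by rw [hP, hmap]; exact hcen _ hβc _
  have zβ2P : β (β P) ∈ Subgroup.center G := by rw [hP, hmap, hmap]; exact hcen _ hβ2c _
  have zβQ : β Q ∈ Subgroup.center G := by rw [hQ, hmap]; exact hcen _ hβ2c _
  have key := esys_comm (⟨B, zB⟩ : Subgroup.center G) ⟨β B, zβB⟩ ⟨β (β B), zβ2B⟩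
    ⟨P, zP⟩ ⟨β P, zβP⟩ ⟨β (β P), zβ2P⟩ ⟨Q, zQ⟩ ⟨β Q, zβQ⟩
    (Subtype.ext (by simpa using h1 B)) (Subtype.ext (by simpa using h1 P))
    (Subtype.ext (by simpa [mul_assoc] using e1)) (Subtype.ext (by simpa [mul_assoc] using e3))
    (Subtype.ext (by simpa using e3')) (Subtype.ext (by simpa using e4))
  have hcubeG : ((P * β B * B) * (P * β B * B)) * (P * β B * B) = 1 := by
    have := congrArg (Subtype.val) key.1
    simpa using this
  have hone : P * β B * B = 1 := tor3 _ hcubeG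
  have hpair := key.2 (Subtype.ext (by simpa using hone))
  exact ⟨congrArg Subtype.val hpair.1, congrArg Subtype.val hpair.2⟩

private theorem jfin_add {A : Type*} [AddCommGroup A] (t w v t1 w1 v1 t2 w2 v2 : A)
    (j1 : -t1 + -w1 + -v2 = 0) (j2 : -t1 + -w2 + -v1 = 0) (j3 : -t2 + -w1 + -v1 = 0) :
    t1 + -w1 = t2 + -w2 ∧ w1 + -v1 = w2 + -v2 := by
  constructor
  · have h : (t1 + -w1) - (t2 + -w2) = (-t2 + -w1 + -v1) - (-t1 + -w2 + -v1) := by abel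
    rw [j3, j2] at h
    exact sub_eq_zero.mp (by rw [h]; simp)
  · have h : (w1 + -v1) - (w2 + -v2) = (-t1 + -w2 + -v1) - (-t1 + -w1 + -v2) := by abel
    rw [j2, j1] at h
    exact sub_eq_zero.mp (by rw [h]; simp)

private theorem jfin_comm {A : Type*} [CommGroup A] (t w v t1 w1 v1 t2 w2 v2 : A)
    (j1 : t1⁻¹ * w1⁻¹ * v2⁻¹ = 1) (j2 : t1⁻¹ * w2⁻¹ * v1⁻¹ = 1) (j3 : t2⁻¹ * w1⁻¹ * v1⁻¹ = 1) :
    t1 * w1⁻¹ = t2 * w2⁻¹ ∧ w1 * v1⁻¹ = w2 * v2⁻¹ :=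
  jfin_add (A := Additive A) t w v t1 w1 v1 t2 w2 v2 j1 j2 j3

private theorem classStep {G : Type*} [Group G] (β : MulAut G)
    (hβ3 : ∀ g : G, β (β (β g)) = g)
    (h1 : ∀ g : G, g * β g * β (β g) = 1)
    (hcard : ¬ (3 ∣ Nat.card G))
    (hbot : (⊤ : Subgroup G).lowerCentralSeries 3 = ⊥) :
    (⊤ : Subgroup G).lowerCentralSeries 2 = ⊥ := by
  have tor3 : ∀ g : G, (g * g) * g = 1 → g = 1 := by
    intro g hg
    have h3 : g ^ 3 = 1 := by rw [show g ^ 3 = (g * g) * g by rw [pow_succ, pow_two], hg]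
    have hdvd : orderOf g ∣ 3 := orderOf_dvd_of_pow_eq_one h3
    rcases (Nat.prime_three).eq_one_or_self_of_dvd _ hdvd with h | h
    · exact orderOf_eq_one_iff.mp h
    · exact absurd (h ▸ orderOf_dvd_natCard g) hcard
  have fixed3 : ∀ g : G, β g = g → g = 1 := by
    intro g hg
    have h := h1 g
    rw [hg, hg] at h
    exact tor3 g h
  have cen3 : ∀ u ∈ (⊤ : Subgroup G).lowerCentralSeries 1, ∀ v w : G, Commute ⁅u, v⁆ w := by
    intro u hu v w
    have h : ⁅⁅u, v⁆, w⁆ ∈ (⊤ : Subgroup G).lowerCentralSeries 3 := mem_lcs_succ (mem_lcs_succ hu v) w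
    rw [hbot, Subgroup.mem_bot] at h
    exact commutatorElement_eq_one_iff_commute.mp h
  have βmem : ∀ g ∈ (⊤ : Subgroup G).lowerCentralSeries 1, β g ∈ (⊤ : Subgroup G).lowerCentralSeries 1 := by
    haveI := lcs_characteristic (G := G) 1
    intro g hg
    have h := Subgroup.characteristic_iff_map_eq.mp ‹_› (β : G ≃* G)
    rw [← h]
    exact ⟨g, hg, rfl⟩
  have D3 : ∀ c ∈ (⊤ : Subgroup G).lowerCentralSeries 1, ∀ z : G,
      ⁅c, β z⁆ = β (β ⁅c, z⁆) ∧ ⁅β c, z⁆ = β (β ⁅c, z⁆) := fun c hc z =>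
    dstep β h1 tor3 ((⊤ : Subgroup G).lowerCentralSeries 1) βmem cen3 c z hc
  -- quotient by γ₃ = (⊤ : Subgroup G).lowerCentralSeries 2
  set N := (⊤ : Subgroup G).lowerCentralSeries 2 with hN
  haveI : N.Characteristic := lcs_characteristic 2
  have hNmap : N.map (β : G ≃* G) = N := Subgroup.characteristic_iff_map_eq.mp ‹_› (β : G ≃* G)
  set β₂ : MulAut (G ⧸ N) := QuotientGroup.congr N N (β : G ≃* G) hNmap with hβ₂
  have hmk : ∀ x : G, β₂ ((x : G ⧸ N)) = ((β x : G) : G ⧸ N) := fun x => rfl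
  have hβ3₂ : ∀ u : G ⧸ N, β₂ (β₂ (β₂ u)) = u := by
    intro u
    induction u using QuotientGroup.induction_on with
    | H x => rw [hmk, hmk, hmk, hβ3]
  have h1₂ : ∀ u : G ⧸ N, u * β₂ u * β₂ (β₂ u) = 1 := by
    intro u
    induction u using QuotientGroup.induction_on with
    | H x =>
      simp only [hmk]
      rw [← QuotientGroup.mk_mul, ← QuotientGroup.mk_mul, h1 x, QuotientGroup.mk_one]
  have tor3₂ : ∀ u : G ⧸ N, (u * u) * u = 1 → u = 1 := by
    intro u hu
    have hcard₂ : ¬ (3 ∣ Nat.card (G ⧸ N)) := fun hd =>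
      hcard (hd.trans (Subgroup.card_quotient_dvd_card N))
    have h3 : u ^ 3 = 1 := by rw [show u ^ 3 = (u * u) * u by rw [pow_succ, pow_two], hu]
    have hdvd : orderOf u ∣ 3 := orderOf_dvd_of_pow_eq_one h3
    rcases (Nat.prime_three).eq_one_or_self_of_dvd _ hdvd with h | h
    · exact orderOf_eq_one_iff.mp h
    · exact absurd (h ▸ orderOf_dvd_natCard u) hcard₂
  have hbot₂ : (⊤ : Subgroup (G ⧸ N)).lowerCentralSeries 2 = ⊥ := by
    rw [← lcs_map_surj (QuotientGroup.mk' N) (QuotientGroup.mk'_surjective N) 2,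
      Subgroup.map_eq_bot_iff, QuotientGroup.ker_mk']
  have cen₂ : ∀ u ∈ (⊤ : Subgroup (G ⧸ N)), ∀ v w : G ⧸ N, Commute ⁅u, v⁆ w := by
    intro u _ v w
    have h : ⁅⁅u, v⁆, w⁆ ∈ (⊤ : Subgroup (G ⧸ N)).lowerCentralSeries 2 := mem_lcs_succ (mem_lcs_one u v) w
    rw [hbot₂, Subgroup.mem_bot] at h
    exact commutatorElement_eq_one_iff_commute.mp h
  have hmkc : ∀ a b : G, ((⁅a, b⁆ : G) : G ⧸ N) = ⁅(a : G ⧸ N), (b : G ⧸ N)⁆ := fun a b =>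
    map_commutatorElement (QuotientGroup.mk' N) a b
  have D2 : ∀ x y : G, (∃ t ∈ N, ⁅x, β y⁆ = β (β ⁅x, y⁆) * t) ∧
      (∃ t ∈ N, ⁅β x, y⁆ = β (β ⁅x, y⁆) * t) := by
    intro x y
    have hd := dstep β₂ h1₂ tor3₂ ⊤ (fun g _ => Subgroup.mem_top _) cen₂
      ((x : G ⧸ N)) ((y : G ⧸ N)) (Subgroup.mem_top _)
    constructor
    · have h := hd.1
      simp only [hmk, ← hmkc] at h
      have hmem := QuotientGroup.eq.mp h.symm
      exact ⟨_, hmem, by group⟩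
    · have h := hd.2
      simp only [hmk, ← hmkc] at h
      have hmem := QuotientGroup.eq.mp h.symm
      exact ⟨_, hmem, by group⟩
  have dropT : ∀ a ∈ (⊤ : Subgroup G).lowerCentralSeries 1, ∀ t ∈ N, ∀ z : G, ⁅a * t, z⁆ = ⁅a, z⁆ := by
    intro a _ t ht z
    have ht1 : ⁅t, z⁆ = 1 := by
      have h := mem_lcs_succ (hN ▸ ht) z
      rw [hbot, Subgroup.mem_bot] at h
      exact h
    rw [comm_mul_left a t z (fun w => by rw [ht1]; exact Commute.one_left w), ht1, mul_one]
  have conjX : ∀ g u : G, (∀ w : G, Commute u w) → g⁻¹ * u * g = u := fun g u hu => by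
    rw [mul_assoc, (hu g).eq, ← mul_assoc, inv_mul_cancel, one_mul]
  have key : ∀ a b c : G, ⁅⁅a⁻¹, b⁆⁻¹, c⁻¹⁆ = ⁅⁅a, b⁆, c⁆⁻¹ := by
    intro a b c
    have hd : ⁅a⁻¹, b⁆ = ⁅a, b⁆⁻¹ * ⁅⁅a, b⁆, a⁻¹⁆ := by group
    rw [comm_inv_left _ _ (cen3 _ (mem_lcs_one a⁻¹ b) c⁻¹),
      comm_inv_right _ _ (cen3 _ (mem_lcs_one a⁻¹ b) c), inv_inv, hd,
      dropT _ (inv_mem (mem_lcs_one a b)) _ (hN ▸ mem_lcs_succ (mem_lcs_one a b) a⁻¹) c,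
      comm_inv_left _ _ (cen3 _ (mem_lcs_one a b) c)]
  have jacobi : ∀ a b c : G, ⁅⁅a, b⁆, c⁆⁻¹ * ⁅⁅b, c⁆, a⁆⁻¹ * ⁅⁅c, a⁆, b⁆⁻¹ = 1 := by
    intro a b c
    have hw : (b⁻¹ * ⁅⁅a⁻¹, b⁆⁻¹, c⁻¹⁆ * b) * (c⁻¹ * ⁅⁅b⁻¹, c⁆⁻¹, a⁻¹⁆ * c) *
        (a⁻¹ * ⁅⁅c⁻¹, a⁆⁻¹, b⁻¹⁆ * a) = 1 := by group
    rw [key a b c, key b c a, key c a b,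
      conjX b _ (fun w => (cen3 _ (mem_lcs_one a b) c w).inv_left),
      conjX c _ (fun w => (cen3 _ (mem_lcs_one b c) a w).inv_left),
      conjX a _ (fun w => (cen3 _ (mem_lcs_one c a) b w).inv_left)] at hw
    exact hw
  have rββ : ∀ c ∈ (⊤ : Subgroup G).lowerCentralSeries 1, ∀ u : G, ⁅β (β c), u⁆ = β ⁅c, u⁆ := by
    intro c hc u
    rw [(D3 (β c) (βmem c hc) u).2, (D3 c hc u).2, hβ3 (β ⁅c, u⁆)]
  have hTriv : ∀ x y z : G, ⁅⁅x, y⁆, z⁆ = 1 := by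
    intro x y z
    have hB1 : ⁅x, y⁆ ∈ (⊤ : Subgroup G).lowerCentralSeries 1 := mem_lcs_one x y
    have hA3 : ⁅y, z⁆ ∈ (⊤ : Subgroup G).lowerCentralSeries 1 := mem_lcs_one y z
    have hA2 : ⁅z, x⁆ ∈ (⊤ : Subgroup G).lowerCentralSeries 1 := mem_lcs_one z x
    set T := ⁅⁅x, y⁆, z⁆ with hT
    set W := ⁅⁅y, z⁆, x⁆ with hW
    set V := ⁅⁅z, x⁆, y⁆ with hV
    have r1 : ⁅⁅x, β y⁆, z⁆ = β T := by
      obtain ⟨t, ht, he⟩ := (D2 x y).1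
      rw [he, dropT _ (βmem _ (βmem _ hB1)) t ht z, rββ _ hB1 z]
    have r2 : ⁅⁅β y, z⁆, x⁆ = β W := by
      obtain ⟨t, ht, he⟩ := (D2 y z).2
      rw [he, dropT _ (βmem _ (βmem _ hA3)) t ht x, rββ _ hA3 x]
    have r3 : ⁅⁅z, x⁆, β y⁆ = β (β V) := (D3 _ hA2 y).1
    have r4 : ⁅⁅β x, y⁆, z⁆ = β T := by
      obtain ⟨t, ht, he⟩ := (D2 x y).2
      rw [he, dropT _ (βmem _ (βmem _ hB1)) t ht z, rββ _ hB1 z]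
    have r5 : ⁅⁅y, z⁆, β x⁆ = β (β W) := (D3 _ hA3 x).1
    have r6 : ⁅⁅z, β x⁆, y⁆ = β V := by
      obtain ⟨t, ht, he⟩ := (D2 z x).1
      rw [he, dropT _ (βmem _ (βmem _ hA2)) t ht y, rββ _ hA2 y]
    have r7 : ⁅⁅x, y⁆, β z⁆ = β (β T) := (D3 _ hB1 z).1
    have r8 : ⁅⁅y, β z⁆, x⁆ = β W := by
      obtain ⟨t, ht, he⟩ := (D2 y z).1
      rw [he, dropT _ (βmem _ (βmem _ hA3)) t ht x, rββ _ hA3 x]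
    have r9 : ⁅⁅β z, x⁆, y⁆ = β V := by
      obtain ⟨t, ht, he⟩ := (D2 z x).2
      rw [he, dropT _ (βmem _ (βmem _ hA2)) t ht y, rββ _ hA2 y]
    have J0 := jacobi x y z
    rw [← hT, ← hW, ← hV] at J0
    have J1 := jacobi x (β y) z
    rw [r1, r2, r3] at J1
    have J2 := jacobi (β x) y z
    rw [r4, r5, r6] at J2
    have J3 := jacobi x y (β z)
    rw [r7, r8, r9] at J3
    -- lift to the center
    have hmapc : ∀ a b : G, β ⁅a, b⁆ = ⁅β a, β b⁆ := fun a b => map_commutatorElement β a b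
    have hcen : ∀ u ∈ (⊤ : Subgroup G).lowerCentralSeries 1, ∀ v : G, ⁅u, v⁆ ∈ Subgroup.center G :=
      fun u hu v => Subgroup.mem_center_iff.mpr fun g => ((cen3 u hu v g).symm.eq)
    have zT : T ∈ Subgroup.center G := hcen _ hB1 z
    have zW : W ∈ Subgroup.center G := hcen _ hA3 x
    have zV : V ∈ Subgroup.center G := hcen _ hA2 y
    have zT1 : β T ∈ Subgroup.center G := by
      rw [hT, hmapc]; exact hcen _ (βmem _ hB1) _
    have zT2 : β (β T) ∈ Subgroup.center G := by
      rw [hT, hmapc, hmapc]; exact hcen _ (βmem _ (βmem _ hB1)) _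
    have zW1 : β W ∈ Subgroup.center G := by
      rw [hW, hmapc]; exact hcen _ (βmem _ hA3) _
    have zW2 : β (β W) ∈ Subgroup.center G := by
      rw [hW, hmapc, hmapc]; exact hcen _ (βmem _ (βmem _ hA3)) _
    have zV1 : β V ∈ Subgroup.center G := by
      rw [hV, hmapc]; exact hcen _ (βmem _ hA2) _
    have zV2 : β (β V) ∈ Subgroup.center G := by
      rw [hV, hmapc, hmapc]; exact hcen _ (βmem _ (βmem _ hA2)) _
    have hjf := jfin_comm (⟨T, zT⟩ : Subgroup.center G) ⟨W, zW⟩ ⟨V, zV⟩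
      ⟨β T, zT1⟩ ⟨β W, zW1⟩ ⟨β V, zV1⟩ ⟨β (β T), zT2⟩ ⟨β (β W), zW2⟩ ⟨β (β V), zV2⟩
      (Subtype.ext (by simpa using J1)) (Subtype.ext (by simpa using J2))
      (Subtype.ext (by simpa using J3))
    have c1 : β T * (β W)⁻¹ = β (β T) * (β (β W))⁻¹ := by
      have := congrArg Subtype.val hjf.1
      simpa using this
    have c2 : β W * (β V)⁻¹ = β (β W) * (β (β V))⁻¹ := by
      have := congrArg Subtype.val hjf.2
      simpa using this
    have hTW : T = W := by
      have hs : β (T * W⁻¹) = β (β (T * W⁻¹)) := by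
        simp only [map_mul, map_inv]; exact c1
      have h' := congrArg β hs
      rw [hβ3 (T * W⁻¹)] at h'
      have hfix : β (T * W⁻¹) = T * W⁻¹ := by rw [hs]; exact h'
      have := fixed3 _ hfix
      exact (mul_inv_eq_one.mp this)
    have hWV : W = V := by
      have hs : β (W * V⁻¹) = β (β (W * V⁻¹)) := by
        simp only [map_mul, map_inv]; exact c2
      have h' := congrArg β hs
      rw [hβ3 (W * V⁻¹)] at h'
      have hfix : β (W * V⁻¹) = W * V⁻¹ := by rw [hs]; exact h'
      have := fixed3 _ hfix
      exact (mul_inv_eq_one.mp this)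
    rw [← hWV, ← hTW] at J0
    exact tor3 T (inv_injective (by
      rw [show ((T * T) * T)⁻¹ = T⁻¹ * T⁻¹ * T⁻¹ from by group, J0, inv_one]))
  -- conclude : γ₂ ≤ center, hence γ₃ = ⊥
  have hle : (⊤ : Subgroup G).lowerCentralSeries 1 ≤ Subgroup.center G := by
    rw [show (⊤ : Subgroup G).lowerCentralSeries 1 = ⁅(⊤ : Subgroup G), (⊤ : Subgroup G)⁆ from rfl]
    refine Subgroup.commutator_le.mpr ?_
    intro g₁ _ g₂ _
    exact Subgroup.mem_center_iff.mpr fun g =>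
      ((commutatorElement_eq_one_iff_commute.mp (hTriv g₁ g₂ g)).symm.eq)
  rw [eq_bot_iff]
  show ⁅(⊤ : Subgroup G).lowerCentralSeries 1, (⊤ : Subgroup G)⁆ ≤ ⊥
  refine Subgroup.commutator_le.mpr ?_
  intro g₁ hg₁ g₂ _
  exact Subgroup.mem_bot.mpr (commutatorElement_eq_one_iff_commute.mpr
    ((Subgroup.mem_center_iff.mp (hle hg₁) g₂).symm))

private theorem lcs_stab {G : Type*} [Group G] (h : Group.IsNilpotent G) (n : ℕ)
    (heq : (⊤ : Subgroup G).lowerCentralSeries (n + 1) = (⊤ : Subgroup G).lowerCentralSeries n) :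
    (⊤ : Subgroup G).lowerCentralSeries n = ⊥ := by
  obtain ⟨m, hm⟩ := nilpotent_iff_lowerCentralSeries.mp h
  have hall : ∀ k, (⊤ : Subgroup G).lowerCentralSeries (n + k) = (⊤ : Subgroup G).lowerCentralSeries n := by
    intro k
    induction k with
    | zero => rfl
    | succ k ih =>
      rw [show n + (k + 1) = (n + k) + 1 from rfl, lcs_succ, ih, ← lcs_succ, heq]
  have : (⊤ : Subgroup G).lowerCentralSeries n ≤ ⊥ := by
    calc (⊤ : Subgroup G).lowerCentralSeries n = (⊤ : Subgroup G).lowerCentralSeries (n + m) := (hall m).symm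
      _ ≤ (⊤ : Subgroup G).lowerCentralSeries m := lowerCentralSeries_antitone _ (Nat.le_add_left m n)
      _ = ⊥ := hm
  exact le_bot_iff.mp this

/-- If a finite `p`-group `Q` has an automorphism `ζ` of order 3 with trivial
fixed points, then `Q` has nilpotency class at most 2, i.e. `γ₃(Q) = 1`
(`(⊤ : Subgroup Q).lowerCentralSeries 2 = ⊥` in Mathlib's indexing). -/
theorem stmt2 {Q : Type*} [Group Q] [Finite Q] {p : ℕ} (hp : p.Prime)
    (hQ : IsPGroup p Q) (ζ : MulAut Q) (hord : orderOf ζ = 3)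
    (hfix : ∀ x : Q, ζ x = x → x = 1) :
    (⊤ : Subgroup Q).lowerCentralSeries 2 = ⊥ := by
  haveI : Fact p.Prime := ⟨hp⟩
  have hpow : ζ ^ 3 = 1 := by rw [← hord]; exact pow_orderOf_eq_one ζ
  have hζ3 : ∀ g : Q, ζ (ζ (ζ g)) = g := by
    intro g
    have h : (ζ ^ 3) g = g := by rw [hpow]; rfl
    rw [pow_succ, pow_succ, pow_one, MulAut.mul_apply, MulAut.mul_apply] at h
    exact h
  have h1Q : ∀ g : Q, g * ζ g * ζ (ζ g) = 1 := by
    intro g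
    have hfix' : MonoidHom.FixedPointFree ⇑(ζ : Q →* Q) := hfix
    obtain ⟨x, hx⟩ := MonoidHom.FixedPointFree.commutatorMap_surjective hfix' g
    rw [MonoidHom.commutatorMap_apply] at hx
    have hx' : g = x * (ζ x)⁻¹ := by rw [← hx, div_eq_mul_inv]; rfl
    rw [hx', map_mul, map_mul, map_inv, map_inv, hζ3 x]
    group
  have hcard : ¬ (3 ∣ Nat.card Q) := by
    haveI : Fact (Nat.Prime 3) := ⟨Nat.prime_three⟩
    have hS : IsPGroup 3 (Subgroup.zpowers ζ) :=
      IsPGroup.of_card (n := 1) (by rw [Nat.card_zpowers, hord, pow_one])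
    have hmod := IsPGroup.card_modEq_card_fixedPoints hS Q
    have hfp : MulAction.fixedPoints (Subgroup.zpowers ζ) Q = {(1 : Q)} := by
      ext q
      simp only [MulAction.mem_fixedPoints, Set.mem_singleton_iff]
      constructor
      · intro h
        exact hfix q (h ⟨ζ, Subgroup.mem_zpowers ζ⟩)
      · rintro rfl s
        show (s : MulAut Q) • (1 : Q) = 1
        rw [MulAut.smul_def, map_one]
    rw [hfp] at hmod
    have h1 : Nat.card ({(1 : Q)} : Set Q) = 1 := Nat.card_unique
    rw [h1] at hmod
    intro hdvd
    have h0 : Nat.card Q % 3 = 0 := Nat.eq_zero_of_dvd_of_lt hdvd |> fun _ => Nat.mod_eq_zero_of_dvd hdvd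
    have h1' : Nat.card Q % 3 = 1 % 3 := hmod
    omega
  haveI : Group.IsNilpotent Q := hQ.isNilpotent
  set K := (⊤ : Subgroup Q).lowerCentralSeries 3 with hK
  haveI : K.Characteristic := lcs_characteristic 3
  have hKmap : K.map (ζ : Q ≃* Q) = K := Subgroup.characteristic_iff_map_eq.mp ‹_› (ζ : Q ≃* Q)
  set β : MulAut (Q ⧸ K) := QuotientGroup.congr K K (ζ : Q ≃* Q) hKmap with hβ
  have hmk : ∀ x : Q, β ((x : Q ⧸ K)) = ((ζ x : Q) : Q ⧸ K) := fun x => rfl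
  have hβ3 : ∀ u : Q ⧸ K, β (β (β u)) = u := by
    intro u
    induction u using QuotientGroup.induction_on with
    | H x => rw [hmk, hmk, hmk, hζ3]
  have h1' : ∀ u : Q ⧸ K, u * β u * β (β u) = 1 := by
    intro u
    induction u using QuotientGroup.induction_on with
    | H x =>
      simp only [hmk]
      rw [← QuotientGroup.mk_mul, ← QuotientGroup.mk_mul, h1Q x, QuotientGroup.mk_one]
  have hcard' : ¬ (3 ∣ Nat.card (Q ⧸ K)) := fun hd =>
    hcard (hd.trans (Subgroup.card_quotient_dvd_card K))
  have hbotH : (⊤ : Subgroup (Q ⧸ K)).lowerCentralSeries 3 = ⊥ := by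
    rw [← lcs_map_surj (QuotientGroup.mk' K) (QuotientGroup.mk'_surjective K) 3,
      Subgroup.map_eq_bot_iff, QuotientGroup.ker_mk']
  have hstep := classStep β hβ3 h1' hcard' hbotH
  have hmapbot : Subgroup.map (QuotientGroup.mk' K) ((⊤ : Subgroup Q).lowerCentralSeries 2) = ⊥ := by
    rw [lcs_map_surj (QuotientGroup.mk' K) (QuotientGroup.mk'_surjective K) 2]
    exact hstep
  rw [Subgroup.map_eq_bot_iff, QuotientGroup.ker_mk'] at hmapbot
  have heq : (⊤ : Subgroup Q).lowerCentralSeries (2 + 1) = (⊤ : Subgroup Q).lowerCentralSeries 2 :=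
    le_antisymm (lowerCentralSeries_antitone _ (by norm_num)) hmapbot
  exact lcs_stab ‹_› 2 heq
end

section
/- Let p be a prime and Q a finite p-group admitting an automorphism ζ of order 3 with C_Q(ζ) = 1. Then for all v, w ∈ Q, [v, ζ(w)] = [ζ(v), w] = ζ²([v, w]). -/
/-- If a finite `p`-group `Q` has an automorphism `ζ` of order 3 with trivial
fixed points, then for all `v w : Q`, `[v, ζ(w)] = [ζ(v), w] = ζ²([v,w])`,
where `[x,y] = x⁻¹y⁻¹xy`. -/
theorem stmt3 {Q : Type*} [Group Q] [Finite Q] {p : ℕ} (hp : p.Prime)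
    (hQ : IsPGroup p Q) (ζ : MulAut Q) (hord : orderOf ζ = 3)
    (hfix : ∀ x : Q, ζ x = x → x = 1) :
    ∀ v w : Q,
      v⁻¹ * (ζ w)⁻¹ * v * ζ w = (ζ v)⁻¹ * w⁻¹ * ζ v * w ∧
      (ζ v)⁻¹ * w⁻¹ * ζ v * w = ζ (ζ (v⁻¹ * w⁻¹ * v * w)) := by
  -- ζ³ = id
  have hζ3 : ∀ x : Q, ζ (ζ (ζ x)) = x := by
    intro x
    have h : ζ ^ 3 = 1 := hord ▸ pow_orderOf_eq_one ζ
    have h2 : (ζ ^ 3) x = x := by rw [h]; rfl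
    simpa [pow_succ, MulAut.mul_apply, MulAut.one_apply] using h2
  -- ζ² is also fixed-point-free
  have hfix2 : ∀ z : Q, ζ (ζ z) = z → z = 1 := by
    intro z h
    apply hfix
    have h2 := congrArg ζ h
    rw [hζ3] at h2
    exact h2.symm
  -- surjectivity of x ↦ x⁻¹ ζ x
  have hsurj1 : ∀ g : Q, ∃ x, x⁻¹ * ζ x = g := by
    have hinj : Function.Injective fun x : Q => x⁻¹ * ζ x := by
      intro x y hxy
      dsimp only at hxy
      have h1 : ζ (y * x⁻¹) = y * x⁻¹ := by
        rw [map_mul, map_inv]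
        calc ζ y * (ζ x)⁻¹ = y * (y⁻¹ * ζ y) * (ζ x)⁻¹ := by group
        _ = y * (x⁻¹ * ζ x) * (ζ x)⁻¹ := by rw [← hxy]
        _ = y * x⁻¹ := by group
      have h2 := hfix _ h1
      have h3 : y = x := by
        have := mul_inv_eq_one.mp h2
        exact this
      exact h3.symm
    intro g
    exact Finite.surjective_of_injective hinj g
  -- surjectivity of x ↦ x⁻¹ ζ (ζ x)
  have hsurj2 : ∀ g : Q, ∃ x, x⁻¹ * ζ (ζ x) = g := by
    have hinj : Function.Injective fun x : Q => x⁻¹ * ζ (ζ x) := by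
      intro x y hxy
      dsimp only at hxy
      have h1 : ζ (ζ (y * x⁻¹)) = y * x⁻¹ := by
        rw [map_mul, map_inv, map_mul, map_inv]
        calc ζ (ζ y) * (ζ (ζ x))⁻¹ = y * (y⁻¹ * ζ (ζ y)) * (ζ (ζ x))⁻¹ := by group
        _ = y * (x⁻¹ * ζ (ζ x)) * (ζ (ζ x))⁻¹ := by rw [← hxy]
        _ = y * x⁻¹ := by group
      have h2 := hfix2 _ h1
      have h3 : y = x := by
        have := mul_inv_eq_one.mp h2
        exact this
      exact h3.symm
    intro g
    exact Finite.surjective_of_injective hinj g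
  -- key identities
  have K1 : ∀ g : Q, g * ζ g * ζ (ζ g) = 1 := by
    intro g
    obtain ⟨x, hx⟩ := hsurj1 g
    subst hx
    simp only [map_mul, map_inv, hζ3]
    group
  have K2 : ∀ g : Q, g * ζ (ζ g) * ζ g = 1 := by
    intro g
    obtain ⟨x, hx⟩ := hsurj2 g
    subst hx
    simp only [map_mul, map_inv, hζ3]
    group
  -- rearranged forms
  have R2 : ∀ g : Q, ζ (ζ g) * ζ g = g⁻¹ := by
    intro g
    have h := K2 g
    calc ζ (ζ g) * ζ g = g⁻¹ * (g * ζ (ζ g) * ζ g) := by group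
    _ = g⁻¹ * 1 := by rw [h]
    _ = g⁻¹ := by group
  have R3 : ∀ g : Q, g * ζ g = (ζ (ζ g))⁻¹ := by
    intro g
    have h := K1 g
    calc g * ζ g = g * ζ g * ζ (ζ g) * (ζ (ζ g))⁻¹ := by group
    _ = 1 * (ζ (ζ g))⁻¹ := by rw [h]
    _ = (ζ (ζ g))⁻¹ := by group
  have R4 : ∀ g : Q, g * ζ (ζ g) = (ζ g)⁻¹ := by
    intro g
    have h := K2 g
    calc g * ζ (ζ g) = g * ζ (ζ g) * ζ g * (ζ g)⁻¹ := by group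
    _ = 1 * (ζ g)⁻¹ := by rw [h]
    _ = (ζ g)⁻¹ := by group
  have R5 : ∀ g : Q, ζ g * g = (ζ (ζ g))⁻¹ := by
    intro g
    have h := R2 (ζ (ζ g))
    simp only [hζ3] at h
    exact h
  have R6 : ∀ g : Q, ζ (ζ g) * g = (ζ g)⁻¹ := by
    intro g
    have h := K1 (ζ g)
    have h' : ζ (ζ g) * ζ (ζ (ζ g)) = (ζ g)⁻¹ := by
      calc ζ (ζ g) * ζ (ζ (ζ g)) = (ζ g)⁻¹ * (ζ g * ζ (ζ g) * ζ (ζ (ζ g))) := by group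
      _ = (ζ g)⁻¹ * 1 := by rw [h]
      _ = (ζ g)⁻¹ := by group
    simp only [hζ3] at h'
    exact h'
  -- inverse of commutator under ζ²
  have hcinv : ∀ v w : Q, (ζ (ζ (w * v * w⁻¹ * v⁻¹)))⁻¹ = ζ (ζ (v * w * v⁻¹ * w⁻¹)) := by
    intro v w
    have h2 : (w * v * w⁻¹ * v⁻¹)⁻¹ = v * w * v⁻¹ * w⁻¹ := by group
    rw [← map_inv, ← map_inv, h2]
  -- Step A : [ζ v, w] = ζ²(v w v⁻¹ w⁻¹)
  have A : ∀ v w : Q, (ζ v)⁻¹ * w⁻¹ * ζ v * w = ζ (ζ (v * w * v⁻¹ * w⁻¹)) := by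
    intro v w
    have t7 : w⁻¹ * ζ v * ((ζ w)⁻¹ * ζ (ζ v)) = v⁻¹ * ζ (ζ w) := by
      have h := R3 (w⁻¹ * ζ v)
      simp only [map_mul, map_inv, hζ3, mul_assoc, mul_inv_rev, inv_inv] at h ⊢
      exact h
    calc (ζ v)⁻¹ * w⁻¹ * ζ v * w
        = (ζ v)⁻¹ * (w⁻¹ * ζ v * ((ζ w)⁻¹ * ζ (ζ v)) * ((ζ (ζ v))⁻¹ * (ζ w * w))) := by group
    _ = (ζ v)⁻¹ * (v⁻¹ * ζ (ζ w) * ((ζ (ζ v))⁻¹ * (ζ w * w))) := by rw [t7]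
    _ = (v * ζ v)⁻¹ * (ζ (ζ w) * ((ζ (ζ v))⁻¹ * (ζ w * w))) := by group
    _ = ((ζ (ζ v))⁻¹)⁻¹ * (ζ (ζ w) * ((ζ (ζ v))⁻¹ * (ζ (ζ w))⁻¹)) := by rw [R3 v, R5 w]
    _ = ζ (ζ (v * w * v⁻¹ * w⁻¹)) := by
        simp only [map_mul, map_inv, mul_assoc, inv_inv]
  -- Step B : [ζ v, w] = v (ζ w) v⁻¹ (ζ w)⁻¹
  have B : ∀ v w : Q, (ζ v)⁻¹ * w⁻¹ * ζ v * w = v * ζ w * v⁻¹ * (ζ w)⁻¹ := by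
    intro v w
    have t8 : w⁻¹ * ζ v * ((ζ (ζ w))⁻¹ * v) = (ζ (ζ v))⁻¹ * ζ w := by
      have h := R4 (w⁻¹ * ζ v)
      simp only [map_mul, map_inv, hζ3, mul_assoc, mul_inv_rev, inv_inv] at h ⊢
      exact h
    calc (ζ v)⁻¹ * w⁻¹ * ζ v * w
        = (ζ v)⁻¹ * (w⁻¹ * ζ v * ((ζ (ζ w))⁻¹ * v) * (v⁻¹ * (ζ (ζ w) * w))) := by group
    _ = (ζ v)⁻¹ * ((ζ (ζ v))⁻¹ * ζ w * (v⁻¹ * (ζ (ζ w) * w))) := by rw [t8]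
    _ = (ζ (ζ v) * ζ v)⁻¹ * (ζ w * (v⁻¹ * (ζ (ζ w) * w))) := by group
    _ = (v⁻¹)⁻¹ * (ζ w * (v⁻¹ * (ζ w)⁻¹)) := by rw [R2 v, R6 w]
    _ = v * ζ w * v⁻¹ * (ζ w)⁻¹ := by group
  -- Step D1 : ζ²(v w v⁻¹ w⁻¹) commutes with ζ² w
  have D1 : ∀ v w : Q,
      ζ (ζ (v * w * v⁻¹ * w⁻¹)) * ζ (ζ w) = ζ (ζ w) * ζ (ζ (v * w * v⁻¹ * w⁻¹)) := by
    intro v w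
    have t9 : (ζ v)⁻¹ * w⁻¹ * ((ζ (ζ v))⁻¹ * (ζ w)⁻¹) = ζ (ζ w) * v := by
      have h := R3 ((ζ v)⁻¹ * w⁻¹)
      simp only [map_mul, map_inv, hζ3, mul_assoc, mul_inv_rev, inv_inv] at h ⊢
      exact h
    have hBA : v * ζ w * v⁻¹ * (ζ w)⁻¹ = ζ (ζ (v * w * v⁻¹ * w⁻¹)) := (B v w).symm.trans (A v w)
    have hc : v * ζ w * v⁻¹ = ζ (ζ (v * w * v⁻¹ * w⁻¹)) * ζ w := by
      calc v * ζ w * v⁻¹ = v * ζ w * v⁻¹ * (ζ w)⁻¹ * ζ w := by group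
      _ = ζ (ζ (v * w * v⁻¹ * w⁻¹)) * ζ w := by rw [hBA]
    have key : ζ (ζ (v * w * v⁻¹ * w⁻¹))
        = ζ (ζ w) * (ζ (ζ (v * w * v⁻¹ * w⁻¹)) * (ζ (ζ w))⁻¹) := by
      calc ζ (ζ (v * w * v⁻¹ * w⁻¹))
          = (ζ v)⁻¹ * w⁻¹ * ζ v * w := (A v w).symm
      _ = (ζ v)⁻¹ * w⁻¹ * ((ζ (ζ v))⁻¹ * (ζ w)⁻¹) * (ζ w * (ζ (ζ v) * (ζ v * w))) := by group
      _ = ζ (ζ w) * v * (ζ w * (ζ (ζ v) * (ζ v * w))) := by rw [t9]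
      _ = ζ (ζ w) * (v * ζ w * (ζ (ζ v) * ζ v) * w) := by group
      _ = ζ (ζ w) * (v * ζ w * v⁻¹ * w) := by rw [R2 v]
      _ = ζ (ζ w) * (ζ (ζ (v * w * v⁻¹ * w⁻¹)) * ζ w * w) := by rw [hc]
      _ = ζ (ζ w) * (ζ (ζ (v * w * v⁻¹ * w⁻¹)) * (ζ w * w)) := by group
      _ = ζ (ζ w) * (ζ (ζ (v * w * v⁻¹ * w⁻¹)) * (ζ (ζ w))⁻¹) := by rw [R5 w]
    calc ζ (ζ (v * w * v⁻¹ * w⁻¹)) * ζ (ζ w)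
        = ζ (ζ w) * (ζ (ζ (v * w * v⁻¹ * w⁻¹)) * (ζ (ζ w))⁻¹) * ζ (ζ w) := by rw [← key]
    _ = ζ (ζ w) * ζ (ζ (v * w * v⁻¹ * w⁻¹)) := by group
  -- Step D2 : ζ²(v w v⁻¹ w⁻¹) commutes with ζ² v
  have D2 : ∀ v w : Q,
      ζ (ζ (v * w * v⁻¹ * w⁻¹)) * ζ (ζ v) = ζ (ζ v) * ζ (ζ (v * w * v⁻¹ * w⁻¹)) := by
    intro v w
    have h := D1 w v
    rw [← hcinv v w]
    calc (ζ (ζ (w * v * w⁻¹ * v⁻¹)))⁻¹ * ζ (ζ v)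
        = (ζ (ζ (w * v * w⁻¹ * v⁻¹)))⁻¹ * (ζ (ζ v) * ζ (ζ (w * v * w⁻¹ * v⁻¹)))
            * (ζ (ζ (w * v * w⁻¹ * v⁻¹)))⁻¹ := by group
    _ = (ζ (ζ (w * v * w⁻¹ * v⁻¹)))⁻¹ * (ζ (ζ (w * v * w⁻¹ * v⁻¹)) * ζ (ζ v))
            * (ζ (ζ (w * v * w⁻¹ * v⁻¹)))⁻¹ := by rw [← h]
    _ = ζ (ζ v) * (ζ (ζ (w * v * w⁻¹ * v⁻¹)))⁻¹ := by group
  -- Step E : v w v⁻¹ w⁻¹ commutes with v and w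
  have hred : ∀ v w : Q,
      ζ (ζ (ζ v * ζ w * (ζ v)⁻¹ * (ζ w)⁻¹)) = v * w * v⁻¹ * w⁻¹ := by
    intro v w
    simp only [map_mul, map_inv, hζ3, mul_assoc]
  have Ew : ∀ v w : Q, v * w * v⁻¹ * w⁻¹ * w = w * (v * w * v⁻¹ * w⁻¹) := by
    intro v w
    have h := D1 (ζ v) (ζ w)
    rw [hred, hζ3] at h
    exact h
  have Ev : ∀ v w : Q, v * w * v⁻¹ * w⁻¹ * v = v * (v * w * v⁻¹ * w⁻¹) := by
    intro v w
    have h := D2 (ζ v) (ζ w)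
    rw [hred, hζ3] at h
    exact h
  -- conclude
  intro v w
  have hd1 : v⁻¹ * (v * w * v⁻¹ * w⁻¹) * v = v * w * v⁻¹ * w⁻¹ := by
    calc v⁻¹ * (v * w * v⁻¹ * w⁻¹) * v = v⁻¹ * (v * w * v⁻¹ * w⁻¹ * v) := by group
    _ = v⁻¹ * (v * (v * w * v⁻¹ * w⁻¹)) := by rw [Ev v w]
    _ = v * w * v⁻¹ * w⁻¹ := by group
  have hd2 : w⁻¹ * (v * w * v⁻¹ * w⁻¹) * w = v * w * v⁻¹ * w⁻¹ := by
    calc w⁻¹ * (v * w * v⁻¹ * w⁻¹) * w = w⁻¹ * (v * w * v⁻¹ * w⁻¹ * w) := by group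
    _ = w⁻¹ * (w * (v * w * v⁻¹ * w⁻¹)) := by rw [Ew v w]
    _ = v * w * v⁻¹ * w⁻¹ := by group
  have hE : v⁻¹ * w⁻¹ * v * w = v * w * v⁻¹ * w⁻¹ := by
    calc v⁻¹ * w⁻¹ * v * w = v⁻¹ * (w⁻¹ * (v * w * v⁻¹ * w⁻¹) * w) * v := by group
    _ = v⁻¹ * (v * w * v⁻¹ * w⁻¹) * v := by rw [hd2]
    _ = v * w * v⁻¹ * w⁻¹ := hd1
  constructor
  · calc v⁻¹ * (ζ w)⁻¹ * v * ζ w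
        = ((ζ w)⁻¹ * v⁻¹ * ζ w * v)⁻¹ := by group
    _ = (ζ (ζ (w * v * w⁻¹ * v⁻¹)))⁻¹ := by rw [A w v]
    _ = ζ (ζ (v * w * v⁻¹ * w⁻¹)) := hcinv v w
    _ = (ζ v)⁻¹ * w⁻¹ * ζ v * w := (A v w).symm
  · calc (ζ v)⁻¹ * w⁻¹ * ζ v * w = ζ (ζ (v * w * v⁻¹ * w⁻¹)) := A v w
    _ = ζ (ζ (v⁻¹ * w⁻¹ * v * w)) := by rw [hE]
end

section
/- Let Q be a finite p-group with an automorphism ζ of order 3 satisfying C_Q(ζ) = 1, and let Q = Q₁ ≥ Q₂ ≥ ... be the lower central series. Then for every x ∈ Q and every i, the product x·ζ(x)·ζ²(x) lies in Q_{i+1} whenever x ∈ Q_i. -/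
open MulAction
open scoped commutatorElement

/-- Orbit-counting for an order-3 automorphism on an invariant subset. -/
lemma mycong {Q : Type*} [Group Q] [Finite Q] (ζ : MulAut Q) (hord : orderOf ζ = 3)
    (S : Set Q) (hS : ∀ z ∈ S, ζ z ∈ S) :
    Nat.card S ≡ Nat.card {z : Q | z ∈ S ∧ ζ z = z} [MOD 3] := by
  have h3 : ζ ^ 3 = 1 := hord ▸ pow_orderOf_eq_one ζ
  have hinv : ζ⁻¹ = ζ ^ 2 := by
    have h : ζ * ζ ^ 2 = 1 := by rw [← pow_succ']; exact h3
    exact inv_eq_of_mul_eq_one_right h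
  have hinvS : ∀ z ∈ S, ζ⁻¹ z ∈ S := by
    intro z hz
    have h : ζ⁻¹ z = ζ (ζ z) := by rw [hinv]; rfl
    rw [h]; exact hS _ (hS _ hz)
  have hk : ∀ (k : ℤ), ∀ z ∈ S, (ζ ^ k) z ∈ S := by
    intro k
    induction k using Int.induction_on with
    | zero => simpa using fun z hz => hz
    | succ k ih =>
        intro z hz
        have h : (ζ ^ ((k : ℤ) + 1)) z = (ζ ^ (k : ℤ)) (ζ z) := by
          rw [zpow_add_one]; rfl
        rw [h]; exact ih _ (hS _ hz)
    | pred k ih =>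
        intro z hz
        have h : (ζ ^ (-(k : ℤ) - 1)) z = (ζ ^ (-(k : ℤ))) (ζ⁻¹ z) := by
          rw [zpow_sub_one]; rfl
        rw [h]; exact ih _ (hinvS _ hz)
  have hfixk : ∀ (k : ℤ), ∀ z : Q, ζ z = z → (ζ ^ k) z = z := by
    intro k z hz
    have hz' : ζ⁻¹ z = z := by
      conv_lhs => rw [← hz]
      rw [← MulAut.mul_apply, inv_mul_cancel]; rfl
    induction k using Int.induction_on with
    | zero => rfl
    | succ k ih =>
        have h : (ζ ^ ((k : ℤ) + 1)) z = (ζ ^ (k : ℤ)) (ζ z) := by rw [zpow_add_one]; rfl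
        rw [h, hz, ih]
    | pred k ih =>
        have h : (ζ ^ (-(k : ℤ) - 1)) z = (ζ ^ (-(k : ℤ))) (ζ⁻¹ z) := by rw [zpow_sub_one]; rfl
        rw [h, hz', ih]
  set H : Subgroup (MulAut Q) := Subgroup.zpowers ζ with hH
  have hHp : IsPGroup 3 H :=
    IsPGroup.of_card ((Nat.card_zpowers ζ).trans (hord.trans (pow_one 3).symm))
  let sub : SubMulAction H Q :=
    { carrier := S
      smul_mem' := by
        rintro ⟨c, k, rfl⟩ z hz
        exact hk k z hz }
  have key := hHp.card_modEq_card_fixedPoints sub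
  have e1 : Nat.card sub = Nat.card S :=
    Nat.card_congr ⟨fun a => ⟨a.1, a.2⟩, fun a => ⟨a.1, a.2⟩, fun _ => rfl, fun _ => rfl⟩
  have e2 : Nat.card (fixedPoints H sub) = Nat.card {z : Q | z ∈ S ∧ ζ z = z} := by
    refine Nat.card_congr ⟨fun a => ⟨a.1.1, a.1.2, ?_⟩, fun z =>
      ⟨⟨z.1, z.2.1⟩, ?_⟩, fun _ => rfl, fun _ => rfl⟩
    · have h := a.2 ⟨ζ, Subgroup.mem_zpowers ζ⟩
      exact congrArg Subtype.val h
    · rintro ⟨g, k, rfl⟩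
      apply Subtype.ext
      exact hfixk k z.1 z.2.2
  rw [e1, e2] at key
  exact key

/-- If a finite `p`-group `Q` has an automorphism `ζ` of order 3 with trivial
fixed points, and `Q = Q₁ ≥ Q₂ ≥ ...` is the lower central series
(`Q_{i+1} = lowerCentralSeries Q i` in Mathlib's 0-based indexing), then for
every `i` and every `x ∈ Q_{i+1}`, the product `x·ζ(x)·ζ²(x)` lies in `Q_{i+2}`. -/
theorem stmt4 {Q : Type*} [Group Q] [Finite Q] {p : ℕ} (hp : p.Prime)
    (hQ : IsPGroup p Q) (ζ : MulAut Q) (hord : orderOf ζ = 3)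
    (hfix : ∀ x : Q, ζ x = x → x = 1) :
    ∀ (i : ℕ) (x : Q), x ∈ (⊤ : Subgroup Q).lowerCentralSeries i →
      x * ζ x * ζ (ζ x) ∈ (⊤ : Subgroup Q).lowerCentralSeries (i + 1) := by
  intro i x hx
  haveI : Fact p.Prime := ⟨hp⟩
  set M := (⊤ : Subgroup Q).lowerCentralSeries i with hM
  set N := (⊤ : Subgroup Q).lowerCentralSeries (i + 1) with hN
  set y := x * ζ x * ζ (ζ x) with hy
  have h3 : ζ ^ 3 = 1 := hord ▸ pow_orderOf_eq_one ζ
  have hζ3 : ∀ a : Q, ζ (ζ (ζ a)) = a := by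
    intro a
    have h : (ζ ^ 3) a = a := by rw [h3]; rfl
    simpa [pow_succ, MulAut.mul_apply] using h
  have hmapM : ∀ a ∈ M, ζ a ∈ M := fun a ha =>
    lowerCentralSeries.map (ζ : Q →* Q) i (Subgroup.mem_map_of_mem _ ha)
  have hmapN : ∀ a ∈ N, ζ a ∈ N := fun a ha =>
    lowerCentralSeries.map (ζ : Q →* Q) (i + 1) (Subgroup.mem_map_of_mem _ ha)
  have hcommN : ∀ a ∈ M, ∀ b : Q, ⁅a, b⁆ ∈ N := by
    intro a ha b
    rw [hN, lowerCentralSeries_succ]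
    exact Subgroup.commutator_mem_commutator ha (Subgroup.mem_top b)
  -- elements of M are central mod N
  have hcent : ∀ a ∈ M, ∀ b : Q,
      (QuotientGroup.mk (b * a) : Q ⧸ N) = QuotientGroup.mk (a * b) := by
    intro a ha b
    refine (QuotientGroup.eq).mpr ?_
    have h := hcommN a⁻¹ (inv_mem ha) b⁻¹
    simpa [commutatorElement_def, mul_assoc] using h
  have hx2 : ζ x ∈ M := hmapM x hx
  have hx3 : ζ (ζ x) ∈ M := hmapM _ hx2
  -- y is fixed mod N
  have hyfix : y⁻¹ * ζ y ∈ N := by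
    refine (QuotientGroup.eq).mp ?_
    have hζy : ζ y = ζ x * ζ (ζ x) * x := by
      rw [hy]; simp [map_mul, hζ3]
    rw [hζy, hy]
    have h1 := hcent x hx (ζ x * ζ (ζ x))
    calc (QuotientGroup.mk (x * ζ x * ζ (ζ x)) : Q ⧸ N)
        = QuotientGroup.mk (x * (ζ x * ζ (ζ x))) := by rw [mul_assoc]
      _ = QuotientGroup.mk (ζ x * ζ (ζ x) * x) := h1.symm
  -- the coset y·N is ζ-invariant
  set S : Set Q := {z : Q | y⁻¹ * z ∈ N} with hS
  have hSζ : ∀ z ∈ S, ζ z ∈ S := by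
    intro z hz
    have h : y⁻¹ * ζ z = (y⁻¹ * ζ y) * ζ (y⁻¹ * z) := by
      simp [map_mul, map_inv, mul_assoc]
    show y⁻¹ * ζ z ∈ N
    rw [h]
    exact mul_mem hyfix (hmapN _ hz)
  have key := mycong ζ hord S hSζ
  have hcardS : Nat.card S = Nat.card N := by
    refine Nat.card_congr ⟨fun z => ⟨y⁻¹ * z.1, z.2⟩, fun n => ⟨y * n.1, by
      show y⁻¹ * (y * n.1) ∈ N
      simpa [← mul_assoc] using n.2⟩, ?_, ?_⟩
    · intro z; apply Subtype.ext; simp [← mul_assoc]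
    · intro n; apply Subtype.ext; simp [← mul_assoc]
  by_cases hp3 : p = 3
  · -- Q is a 3-group, hence trivial
    subst hp3
    have huniv := mycong ζ hord Set.univ (fun z _ => Set.mem_univ _)
    have hfixset : {z : Q | z ∈ Set.univ ∧ ζ z = z} = {1} := by
      ext z
      simp only [Set.mem_setOf_eq, Set.mem_univ, true_and, Set.mem_singleton_iff]
      exact ⟨hfix z, fun h => by rw [h]; exact map_one ζ⟩
    rw [hfixset] at huniv
    have hcard1 : Nat.card ({1} : Set Q) = 1 := by simp
    have hcarduniv : Nat.card (Set.univ : Set Q) = Nat.card Q := Nat.card_congr (Equiv.Set.univ Q)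
    rw [hcard1, hcarduniv] at huniv
    obtain ⟨k, hk⟩ := (IsPGroup.iff_card (p := 3)).mp hQ
    have hk0 : k = 0 := by
      by_contra hk0
      have hdvd : 3 ∣ Nat.card Q := hk ▸ dvd_pow_self 3 hk0
      have h0 := huniv
      unfold Nat.ModEq at h0
      omega
    rw [hk0, pow_zero] at hk
    have : Subsingleton Q := Nat.card_eq_one_iff_unique.mp hk |>.1
    have : y = 1 := Subsingleton.elim _ _
    rw [this]; exact one_mem N
  · -- |N| is a power of p ≠ 3, so the coset has a ζ-fixed point, which must be 1
    obtain ⟨k, hk⟩ := (IsPGroup.iff_card (p := p)).mp (hQ.to_subgroup N)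
    rw [hcardS, hk] at key
    have hne : {z : Q | z ∈ S ∧ ζ z = z}.Nonempty := by
      by_contra hempty
      rw [Set.not_nonempty_iff_eq_empty] at hempty
      rw [hempty] at key
      rw [Nat.card_of_isEmpty] at key
      have hdvd : 3 ∣ p ^ k := (Nat.modEq_zero_iff_dvd).mp key
      have : 3 ∣ p := Nat.Prime.dvd_of_dvd_pow Nat.prime_three hdvd
      exact hp3 ((Nat.prime_dvd_prime_iff_eq Nat.prime_three hp).mp this).symm
    obtain ⟨z, hzS, hzfix⟩ := hne
    have hz1 : z = 1 := hfix z hzfix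
    rw [hz1] at hzS
    have : y⁻¹ * 1 ∈ N := hzS
    rw [mul_one] at this
    exact (inv_mem_iff).mp this
end

section
/- Let X = AGL₂(3) and S a Sylow 3-subgroup of X. Then C_X(S) = Z(S) is cyclic of order 3. -/
abbrev GL23 := Matrix.GeneralLinearGroup (Fin 2) (ZMod 3)
abbrev V23 := Multiplicative (Fin 2 → ZMod 3)

def glAddAut (g : GL23) : (Fin 2 → ZMod 3) ≃+ (Fin 2 → ZMod 3) where
  toFun v := (g : Matrix (Fin 2) (Fin 2) (ZMod 3)).mulVec v
  invFun v := ((g⁻¹ : GL23) : Matrix (Fin 2) (Fin 2) (ZMod 3)).mulVec v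
  left_inv v := by
    have hd : IsUnit ((g : Matrix (Fin 2) (Fin 2) (ZMod 3)).det) :=
      (Matrix.isUnit_iff_isUnit_det _).mp g.isUnit
    dsimp only
    rw [Matrix.mulVec_mulVec]
    simp [Matrix.nonsing_inv_mul _ hd]
  right_inv v := by
    have hd : IsUnit ((g : Matrix (Fin 2) (Fin 2) (ZMod 3)).det) :=
      (Matrix.isUnit_iff_isUnit_det _).mp g.isUnit
    dsimp only
    rw [Matrix.mulVec_mulVec]
    simp [Matrix.mul_nonsing_inv _ hd]
  map_add' x y := Matrix.mulVec_add _ x y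

def aglPhi : GL23 →* MulAut V23 where
  toFun g := AddEquiv.toMultiplicative (glAddAut g)
  map_one' := by
    ext v
    simp [glAddAut, AddEquiv.toMultiplicative]
  map_mul' g h := by
    ext v
    simp [glAddAut, AddEquiv.toMultiplicative]
    rename_i i
    fin_cases i <;> simp [Matrix.mul_apply, Fin.sum_univ_two] <;> ring

/-- The affine group `AGL₂(3) = (F₃)² ⋊ GL₂(3)`. -/
def AGL23 := SemidirectProduct V23 GL23 aglPhi

instance : Group AGL23 := SemidirectProduct.instGroup


def uu : GL23 := ⟨!![1,1;0,1], !![1,2;0,1], by decide, by decide⟩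

instance : DecidableEq AGL23 := fun a b =>
  decidable_of_iff (a.left = b.left ∧ a.right = b.right)
    ⟨fun ⟨h1, h2⟩ => SemidirectProduct.ext h1 h2, fun h => by subst h; exact ⟨rfl, rfl⟩⟩

def zz : AGL23 := ⟨Multiplicative.ofAdd ![1, 0], 1⟩

example : zz ^ 3 = 1 := by decide
example : zz ≠ 1 := by decide
example : uu ^ 3 = 1 := by decide
example : uu ≠ 1 := by decide

lemma aglPhi_apply (g : GL23) (v : V23) :
    aglPhi g v = Multiplicative.ofAdd
      ((g : Matrix (Fin 2) (Fin 2) (ZMod 3)).mulVec (Multiplicative.toAdd v)) := rfl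

open Subgroup in
def UU : Subgroup GL23 where
  carrier := {g | g = 1 ∨ g = uu ∨ g = uu * uu}
  one_mem' := Or.inl rfl
  mul_mem' := by rintro a b (rfl | rfl | rfl) (rfl | rfl | rfl) <;> first
    | exact Or.inl (by decide) | exact Or.inr (Or.inl (by decide))
    | exact Or.inr (Or.inr (by decide))
  inv_mem' := by rintro a (rfl | rfl | rfl) <;> first
    | exact Or.inl (by decide) | exact Or.inr (Or.inl (by decide))
    | exact Or.inr (Or.inr (by decide))

def S0 : Subgroup AGL23 := UU.comap SemidirectProduct.rightHom

lemma UU_eq : UU = Subgroup.zpowers uu := by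
  apply le_antisymm
  · rintro a (rfl | rfl | rfl)
    · exact Subgroup.one_mem _
    · exact Subgroup.mem_zpowers _
    · exact Subgroup.mul_mem _ (Subgroup.mem_zpowers _) (Subgroup.mem_zpowers _)
  · exact Subgroup.zpowers_le.mpr (Or.inr (Or.inl rfl))

def Z0 : Subgroup AGL23 := Subgroup.zpowers zz

lemma hZ0S0 : Z0 ≤ S0 := Subgroup.zpowers_le.mpr (Or.inl rfl)

lemma card_Z0 : Nat.card Z0 = 3 := by
  have : Fact (Nat.Prime 3) := ⟨by norm_num⟩
  have h1 : zz ^ 3 = 1 := by decide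
  have h2 : zz ≠ 1 := by decide
  rw [Z0, Nat.card_zpowers, orderOf_eq_prime h1 h2]

lemma card_UU : Nat.card UU = 3 := by
  have : Fact (Nat.Prime 3) := ⟨by norm_num⟩
  have h1 : uu ^ 3 = 1 := by decide
  have h2 : uu ≠ 1 := by decide
  rw [UU_eq, Nat.card_zpowers, orderOf_eq_prime h1 h2]

def s0Equiv : S0 ≃ V23 × UU where
  toFun x := ⟨x.1.left, ⟨x.1.right, x.2⟩⟩
  invFun p := ⟨⟨p.1, p.2.1⟩, p.2.2⟩
  left_inv x := rfl
  right_inv p := rfl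

lemma card_S0 : Nat.card S0 = 27 := by
  rw [Nat.card_congr s0Equiv, Nat.card_prod]
  have h1 : Nat.card V23 = 9 := by
    rw [Nat.card_eq_fintype_card]; decide
  rw [h1, card_UU]

lemma card_AGL : Nat.card AGL23 = 432 := by
  have e : AGL23 ≃ V23 × GL23 :=
    ⟨fun x => (x.left, x.right), fun p => ⟨p.1, p.2⟩, fun x => rfl, fun p => rfl⟩
  rw [Nat.card_congr e, Nat.card_prod]
  have h1 : Nat.card V23 = 9 := by rw [Nat.card_eq_fintype_card]; decide
  have h2 : Nat.card GL23 = 48 := by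
    rw [Matrix.card_GL_field]
    simp [Fin.prod_univ_two]
  rw [h1, h2]

lemma hcent0 : Subgroup.centralizer (S0 : Set AGL23) = Z0 := by
  apply le_antisymm
  · intro x hx
    rw [Subgroup.mem_centralizer_iff] at hx
    have ht1 := hx ⟨Multiplicative.ofAdd ![1, 0], 1⟩ (Or.inl rfl)
    have ht2 := hx ⟨Multiplicative.ofAdd ![0, 1], 1⟩ (Or.inl rfl)
    have hw := hx ⟨1, uu⟩ (Or.inr (Or.inl rfl))
    have hl1 : Multiplicative.ofAdd ![1, 0] * (aglPhi (1 : GL23)) x.left =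
        x.left * aglPhi x.right (Multiplicative.ofAdd ![1, 0]) :=
      congrArg SemidirectProduct.left ht1
    have hl2 : Multiplicative.ofAdd ![0, 1] * (aglPhi (1 : GL23)) x.left =
        x.left * aglPhi x.right (Multiplicative.ofAdd ![0, 1]) :=
      congrArg SemidirectProduct.left ht2
    rw [map_one, MulAut.one_apply, mul_comm (Multiplicative.ofAdd ![1, 0]) x.left] at hl1
    rw [map_one, MulAut.one_apply, mul_comm (Multiplicative.ofAdd ![0, 1]) x.left] at hl2
    have hv1 := (mul_left_cancel hl1).symm
    have hv2 := (mul_left_cancel hl2).symm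
    set A : Matrix (Fin 2) (Fin 2) (ZMod 3) := (x.right : Matrix (Fin 2) (Fin 2) (ZMod 3)) with hA
    have hm1 : A.mulVec ![1, 0] = ![1, 0] := congrArg Multiplicative.toAdd hv1
    have hm2 : A.mulVec ![0, 1] = ![0, 1] := congrArg Multiplicative.toAdd hv2
    have e00 : A 0 0 = 1 := by
      simpa [Matrix.mulVec, dotProduct, Fin.sum_univ_two] using congrFun hm1 0
    have e10 : A 1 0 = 0 := by
      simpa [Matrix.mulVec, dotProduct, Fin.sum_univ_two] using congrFun hm1 1
    have e01 : A 0 1 = 0 := by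
      simpa [Matrix.mulVec, dotProduct, Fin.sum_univ_two] using congrFun hm2 0
    have e11 : A 1 1 = 1 := by
      simpa [Matrix.mulVec, dotProduct, Fin.sum_univ_two] using congrFun hm2 1
    have hA1 : A = 1 := by
      ext i j
      fin_cases i <;> fin_cases j <;> simp [e00, e01, e10, e11, Matrix.one_apply]
    have hxr : x.right = 1 := Units.ext hA1
    -- now use commutation with ⟨1, uu⟩
    have hlw : (1 : V23) * aglPhi uu x.left = x.left * aglPhi x.right (1 : V23) :=
      congrArg SemidirectProduct.left hw
    rw [map_one, one_mul, mul_one] at hlw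
    set la : Fin 2 → ZMod 3 := Multiplicative.toAdd x.left with hla
    have hu : (uu : Matrix (Fin 2) (Fin 2) (ZMod 3)).mulVec la = la :=
      congrArg Multiplicative.toAdd hlw
    have h0 : la 0 + la 1 = la 0 := by
      simpa [uu, Matrix.mulVec, dotProduct, Fin.sum_univ_two] using congrFun hu 0
    have hla1 : la 1 = 0 := by
      have h0' := h0
      rwa [add_eq_left] at h0'
    have hc : ∀ c : ZMod 3, c = 0 ∨ c = 1 ∨ c = 2 := by decide
    have hxeq : x = ⟨Multiplicative.ofAdd ![la 0, 0], 1⟩ := by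
      apply SemidirectProduct.ext
      · show x.left = Multiplicative.ofAdd ![la 0, 0]
        have hfun : la = ![la 0, 0] := by
          funext i
          fin_cases i
          · simp
          · simpa using hla1
        calc x.left = Multiplicative.ofAdd la := rfl
        _ = _ := congrArg Multiplicative.ofAdd hfun
      · exact hxr
    rcases hc (la 0) with h | h | h <;> rw [hxeq, h, Z0]
    · exact Subgroup.mem_zpowers_iff.mpr ⟨0, @of_decide_eq_true _ ((inferInstance : DecidableEq AGL23) _ _) rfl⟩
    · exact Subgroup.mem_zpowers_iff.mpr ⟨1, @of_decide_eq_true _ ((inferInstance : DecidableEq AGL23) _ _) rfl⟩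
    · exact Subgroup.mem_zpowers_iff.mpr ⟨2, @of_decide_eq_true _ ((inferInstance : DecidableEq AGL23) _ _) rfl⟩
  · rw [Z0, Subgroup.zpowers_le, Subgroup.mem_centralizer_iff]
    rintro y hy
    have hyr : y.right = 1 ∨ y.right = uu ∨ y.right = uu * uu := hy
    apply SemidirectProduct.ext
    · show y.left * aglPhi y.right zz.left = zz.left * aglPhi zz.right y.left
      have : aglPhi y.right zz.left = zz.left := by
        rcases hyr with h | h | h <;> rw [h] <;> decide
      rw [this]
      show y.left * zz.left = zz.left * aglPhi (1 : GL23) y.left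
      rw [map_one, mul_comm]; rfl
    · show y.right * zz.right = zz.right * y.right
      show y.right * 1 = 1 * y.right
      rw [mul_one, one_mul]

open Pointwise in
lemma centralizer_smul_eq {G : Type*} [Group G] (e : MulAut G) (H : Subgroup G) :
    Subgroup.centralizer ((e • H : Subgroup G) : Set G) =
      e • Subgroup.centralizer (H : Set G) := by
  ext x
  rw [Subgroup.mem_centralizer_iff, Subgroup.mem_pointwise_smul_iff_inv_smul_mem,
    Subgroup.mem_centralizer_iff]
  constructor
  · intro hxx h hh
    have h1 := hxx (e h) (Subgroup.smul_mem_pointwise_smul h e H hh)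
    have h2 := congrArg e.symm h1
    simpa [map_mul, MulAut.smul_def] using h2
  · intro hxx h hh
    have hh' : e.symm h ∈ H := by
      have hh2 : h ∈ e • H := hh
      rw [Subgroup.mem_pointwise_smul_iff_inv_smul_mem] at hh2
      exact hh2
    have h1 := hxx (e.symm h) hh'
    have h2 := congrArg e h1
    simpa [map_mul, MulAut.smul_def] using h2

lemma crux {G : Type*} [Group G] (H Z : Subgroup G) (hZH : Z ≤ H)
    (hcent : Subgroup.centralizer (H : Set G) = Z) (hcard : Nat.card Z = 3) :
    Subgroup.centralizer ((H : Subgroup G) : Set G) =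
        Subgroup.map (H : Subgroup G).subtype (Subgroup.center ↥(H : Subgroup G)) ∧
      IsCyclic ↥(Subgroup.center ↥(H : Subgroup G)) ∧
      Nat.card ↥(Subgroup.center ↥(H : Subgroup G)) = 3 := by
  have h1 : Subgroup.centralizer (H : Set G) =
      Subgroup.map H.subtype (Subgroup.center ↥H) := by
    apply le_antisymm
    · intro x hx
      have hxH : x ∈ H := hZH (hcent ▸ hx)
      refine Subgroup.mem_map.mpr ⟨⟨x, hxH⟩, ?_, rfl⟩
      rw [Subgroup.mem_center_iff]
      intro y
      apply Subtype.ext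
      exact Subgroup.mem_centralizer_iff.mp hx y.1 y.2
    · rintro x ⟨y, hyc, rfl⟩
      rw [Subgroup.mem_centralizer_iff]
      intro h hh
      exact congrArg Subtype.val (Subgroup.mem_center_iff.mp hyc ⟨h, hh⟩)
  have h2 : Nat.card ↥(Subgroup.center ↥H) = 3 := by
    have := Nat.card_congr
      (Subgroup.equivMapOfInjective (Subgroup.center ↥H) H.subtype H.subtype_injective).toEquiv
    rw [this, ← h1, hcent, hcard]
  have : Fact (Nat.Prime 3) := ⟨by norm_num⟩
  exact ⟨h1, isCyclic_of_prime_card h2, h2⟩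

open Pointwise
instance : Finite AGL23 :=
  Finite.of_equiv (V23 × GL23)
    ⟨fun p => ⟨p.1, p.2⟩, fun x => (x.left, x.right), fun p => rfl, fun x => rfl⟩


/-- For a Sylow 3-subgroup `S` of `X = AGL₂(3)`, `C_X(S) = Z(S)` is cyclic of
order 3. -/
theorem stmt9 (S : Sylow 3 AGL23) :
    Subgroup.centralizer ((S : Subgroup AGL23) : Set AGL23) =
        Subgroup.map (S : Subgroup AGL23).subtype
          (Subgroup.center ↥(S : Subgroup AGL23)) ∧
      IsCyclic ↥(Subgroup.center ↥(S : Subgroup AGL23)) ∧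
      Nat.card ↥(Subgroup.center ↥(S : Subgroup AGL23)) = 3 := by
  have hfact : Fact (Nat.Prime 3) := ⟨by norm_num⟩
  have hp1 : IsPGroup 3 S0 := IsPGroup.of_card (n := 3) (by rw [card_S0]; norm_num)
  have hp2 : ¬ (3 ∣ S0.index) := by
    have hmi := Subgroup.card_mul_index S0
    rw [card_S0, card_AGL] at hmi
    have : S0.index = 16 := by omega
    rw [this]
    decide
  let S0syl : Sylow 3 AGL23 := hp1.toSylow hp2
  obtain ⟨g, hg⟩ := MulAction.exists_smul_eq AGL23 S0syl S
  have hS : (S : Subgroup AGL23) = MulAut.conj g • S0 := by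
    rw [← hg]; rfl
  rw [hS]
  refine crux _ (MulAut.conj g • Z0) ?_ ?_ ?_
  · rw [Subgroup.pointwise_smul_def, Subgroup.pointwise_smul_def]
    exact Subgroup.map_mono hZ0S0
  · rw [centralizer_smul_eq, hcent0]
  · rw [← card_Z0]
    exact (Nat.card_congr (Subgroup.equivSMul (MulAut.conj g) Z0).toEquiv).symm
end
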